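/- The quotient Θ := (WZ)^τ/(T(σ²) − σT(σ²)) of the fixed subalgebra (WZ)^τ by the ideal generated by T(σ²) − σ·T(σ²) is a free W-module of rank 2^{d−2}, and Θ is generated as a W-algebra by the residue class of σ + σ^{−1}. -/

import Mathlib

set_option synthInstance.maxHeartbeats 1000000
set_option maxHeartbeats 1000000

instance : Fact (Nat.Prime 2) := ⟨Nat.prime_two⟩

/-- The cyclic group `Z = ⟨σ⟩` of order `2^(d-1)`, written multiplicatively. -/
abbrev cyclicZ (d : ℕ) := Multiplicative (ZMod (2 ^ (d - 1)))

/-- The generator `σ` of `Z`, viewed in the group algebra `WZ`. -/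
noncomputable def sigma (k : Type*) [CommRing k] (d : ℕ) :
    MonoidAlgebra (WittVector 2 k) (cyclicZ d) :=
  MonoidAlgebra.of (WittVector 2 k) (cyclicZ d)
    (Multiplicative.ofAdd (1 : ZMod (2 ^ (d - 1))))

/-- The inverse `σ⁻¹` of the generator, viewed in the group algebra `WZ`. -/
noncomputable def sigmaInv (k : Type*) [CommRing k] (d : ℕ) :
    MonoidAlgebra (WittVector 2 k) (cyclicZ d) :=
  MonoidAlgebra.of (WittVector 2 k) (cyclicZ d)
    (Multiplicative.ofAdd (-1 : ZMod (2 ^ (d - 1))))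

/-- The `W`-algebra automorphism `τ` of `WZ` induced by `σ ↦ σ⁻¹`. -/
noncomputable def tauAut (k : Type*) [CommRing k] (d : ℕ) :
    MonoidAlgebra (WittVector 2 k) (cyclicZ d) ≃ₐ[WittVector 2 k]
      MonoidAlgebra (WittVector 2 k) (cyclicZ d) :=
  MonoidAlgebra.domCongr (WittVector 2 k) (WittVector 2 k) (MulEquiv.inv (cyclicZ d))

/-- The fixed subalgebra `(WZ)^τ`. -/
noncomputable def fixedSubalgebra (k : Type*) [CommRing k] (d : ℕ) :
    Subalgebra (WittVector 2 k) (MonoidAlgebra (WittVector 2 k) (cyclicZ d)) :=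
  AlgHom.equalizer (tauAut k d).toAlgHom (AlgHom.id _ _)

/-- `T(σ²) = 1 + σ² + σ⁴ + ⋯ + σ^(2^(d-1) - 2) ∈ WZ`. -/
noncomputable def Tsigma (k : Type*) [CommRing k] (d : ℕ) :
    MonoidAlgebra (WittVector 2 k) (cyclicZ d) :=
  ∑ i ∈ Finset.range (2 ^ (d - 2)), sigma k d ^ (2 * i)

/-- The ideal `(T(σ²) − σ·T(σ²))` of `(WZ)^τ`. -/
noncomputable def idealTmT (k : Type*) [CommRing k] (d : ℕ) : Ideal (fixedSubalgebra k d) :=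
  Ideal.span {x : fixedSubalgebra k d |
    (x : MonoidAlgebra (WittVector 2 k) (cyclicZ d)) =
      Tsigma k d - sigma k d * Tsigma k d}

section Aux
variable (k : Type*) [CommRing k] (d : ℕ)

instance : NeZero (2 ^ (d - 1)) := ⟨(Nat.pow_pos (by norm_num)).ne'⟩

noncomputable def sg (a : ZMod (2 ^ (d - 1))) : MonoidAlgebra (WittVector 2 k) (cyclicZ d) :=
  MonoidAlgebra.single (Multiplicative.ofAdd a) 1

lemma sg_mul (a b : ZMod (2 ^ (d - 1))) : sg k d a * sg k d b = sg k d (a + b) := by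
  simp [sg, MonoidAlgebra.single_mul_single, ← ofAdd_add]

lemma sg_zero : sg k d 0 = 1 := by
  simp [sg, MonoidAlgebra.one_def]

lemma sigma_eq : sigma k d = sg k d 1 := rfl

lemma sigma_pow (j : ℕ) : sigma k d ^ j = sg k d (j : ZMod (2 ^ (d - 1))) := by
  induction j with
  | zero => simpa using (sg_zero k d).symm
  | succ j ih => rw [pow_succ, ih, sigma_eq, sg_mul]; push_cast; ring_nf

lemma tau_sg (a : ZMod (2 ^ (d - 1))) : tauAut k d (sg k d a) = sg k d (-a) := by
  simp [tauAut, sg]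

lemma mem_fixed_iff (x : MonoidAlgebra (WittVector 2 k) (cyclicZ d)) :
    x ∈ fixedSubalgebra k d ↔ tauAut k d x = x := Iff.rfl

lemma sg_apply (a b : ZMod (2 ^ (d - 1))) :
    (sg k d a).coeff (Multiplicative.ofAdd b) = if a = b then (1 : WittVector 2 k) else 0 := by
  classical
  rw [sg, MonoidAlgebra.single_apply]
  simp [Multiplicative.ofAdd]

lemma tau_apply (f : MonoidAlgebra (WittVector 2 k) (cyclicZ d)) (a : ZMod (2 ^ (d - 1))) :
    (tauAut k d f).coeff (Multiplicative.ofAdd a) = f.coeff (Multiplicative.ofAdd (-a)) := by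
  simp [tauAut]

end Aux

section Aux2
variable (k : Type*) [CommRing k] (d : ℕ)

lemma hn_eq (hd : 3 ≤ d) : 2 ^ (d - 1) = 2 * 2 ^ (d - 2) := by
  have : d - 1 = (d - 2) + 1 := by omega
  rw [this, pow_succ]; ring

lemma cast_2m (hd : 3 ≤ d) : ((2 * 2 ^ (d - 2) : ℕ) : ZMod (2 ^ (d - 1))) = 0 := by
  rw [← hn_eq d hd]; exact ZMod.natCast_self _

/-- `t = T(σ²) - σ T(σ²)`. -/
noncomputable def tEl : MonoidAlgebra (WittVector 2 k) (cyclicZ d) :=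
  Tsigma k d - sigma k d * Tsigma k d

lemma Tsigma_eq : Tsigma k d = ∑ i ∈ Finset.range (2 ^ (d - 2)),
    sg k d ((2 * i : ℕ) : ZMod (2 ^ (d - 1))) := by
  unfold Tsigma
  exact Finset.sum_congr rfl fun i _ => sigma_pow k d (2 * i)

lemma sigma_Tsigma_eq : sigma k d * Tsigma k d = ∑ i ∈ Finset.range (2 ^ (d - 2)),
    sg k d ((2 * i + 1 : ℕ) : ZMod (2 ^ (d - 1))) := by
  rw [Tsigma_eq, Finset.mul_sum]
  refine Finset.sum_congr rfl fun i _ => ?_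
  rw [sigma_eq, sg_mul]
  push_cast
  ring_nf

lemma tEl_eq : tEl k d = ∑ i ∈ Finset.range (2 ^ (d - 2)),
    (sg k d ((2 * i : ℕ) : ZMod (2 ^ (d - 1))) - sg k d ((2 * i + 1 : ℕ) : ZMod (2 ^ (d - 1)))) := by
  rw [tEl, sigma_Tsigma_eq, Tsigma_eq, Finset.sum_sub_distrib]

lemma shift_sum (hd : 3 ≤ d) :
    ∑ i ∈ Finset.range (2 ^ (d - 2)), sg k d ((2 * i + 2 : ℕ) : ZMod (2 ^ (d - 1)))
      = ∑ i ∈ Finset.range (2 ^ (d - 2)), sg k d ((2 * i : ℕ) : ZMod (2 ^ (d - 1))) := by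
  set m := 2 ^ (d - 2) with hm
  set f : ℕ → MonoidAlgebra (WittVector 2 k) (cyclicZ d) :=
    fun i => sg k d ((2 * i : ℕ) : ZMod (2 ^ (d - 1))) with hf
  have h1 : ∑ i ∈ Finset.range m, sg k d ((2 * i + 2 : ℕ) : ZMod (2 ^ (d - 1)))
      = ∑ i ∈ Finset.range m, f (i + 1) := by
    refine Finset.sum_congr rfl fun i _ => ?_
    simp only [hf]; norm_num; ring_nf
  rw [h1]
  have h2 := Finset.sum_range_succ' f m
  have h3 := Finset.sum_range_succ f m
  have hfm : f m = f 0 := by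
    simp only [hf]
    rw [cast_2m d hd]
    norm_num
  rw [h3, hfm] at h2
  exact (add_right_cancel h2.symm)

end Aux2

section Aux3
variable (k : Type*) [CommRing k] (d : ℕ)

lemma sigma_mul_t (hd : 3 ≤ d) : sigma k d * tEl k d = - tEl k d := by
  rw [tEl_eq, Finset.mul_sum]
  have h1 : ∀ i ∈ Finset.range (2 ^ (d - 2)),
      sigma k d * (sg k d ((2 * i : ℕ) : ZMod (2 ^ (d - 1)))
        - sg k d ((2 * i + 1 : ℕ) : ZMod (2 ^ (d - 1))))
      = sg k d ((2 * i + 1 : ℕ) : ZMod (2 ^ (d - 1)))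
        - sg k d ((2 * i + 2 : ℕ) : ZMod (2 ^ (d - 1))) := by
    intro i _
    rw [mul_sub, sigma_eq, sg_mul, sg_mul]
    push_cast
    ring_nf
  rw [Finset.sum_congr rfl h1, Finset.sum_sub_distrib, shift_sum k d hd, Finset.sum_sub_distrib]
  abel

lemma sg_nat_mul_t (hd : 3 ≤ d) (v : ℕ) :
    sg k d ((v : ℕ) : ZMod (2 ^ (d - 1))) * tEl k d = ((-1 : WittVector 2 k) ^ v) • tEl k d := by
  induction v with
  | zero => simp [sg_zero]
  | succ v ih =>
    have : ((v + 1 : ℕ) : ZMod (2 ^ (d - 1))) = 1 + (v : ℕ) := by push_cast; ring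
    rw [this, ← sg_mul, mul_assoc, ih, mul_smul_comm, ← sigma_eq, sigma_mul_t k d hd]
    rw [pow_succ, mul_neg_one, neg_smul, smul_neg]

lemma mul_t_mem (hd : 3 ≤ d) (a : MonoidAlgebra (WittVector 2 k) (cyclicZ d)) :
    a * tEl k d ∈ Submodule.span (WittVector 2 k) {tEl k d} := by
  induction a using MonoidAlgebra.induction_on with
  | of g =>
    have : (MonoidAlgebra.of (WittVector 2 k) (cyclicZ d)) g = sg k d (g.toAdd) := rfl
    rw [this]
    have hg : (g.toAdd : ZMod (2 ^ (d - 1))) = (((g.toAdd).val : ℕ) : ZMod (2 ^ (d - 1))) := by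
      rw [ZMod.natCast_val, ZMod.cast_id]
    rw [hg, sg_nat_mul_t k d hd]
    exact Submodule.smul_mem _ _ (Submodule.mem_span_singleton_self _)
  | add f g hf hg => rw [add_mul]; exact Submodule.add_mem _ hf hg
  | smul r f hf => rw [smul_mul_assoc]; exact Submodule.smul_mem _ _ hf

lemma tau_t (hd : 3 ≤ d) : tauAut k d (tEl k d) = tEl k d := by
  set m := 2 ^ (d - 2) with hm
  have hmpos : 1 ≤ m := Nat.one_le_two_pow
  rw [tEl_eq, map_sum]
  have h1 : ∀ i ∈ Finset.range m,
      tauAut k d (sg k d ((2 * i : ℕ) : ZMod (2 ^ (d - 1)))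
        - sg k d ((2 * i + 1 : ℕ) : ZMod (2 ^ (d - 1))))
      = sg k d ((2 * (m - 1 - i) + 2 : ℕ) : ZMod (2 ^ (d - 1)))
        - sg k d ((2 * (m - 1 - i) + 1 : ℕ) : ZMod (2 ^ (d - 1))) := by
    intro i hi
    rw [Finset.mem_range] at hi
    rw [map_sub, tau_sg, tau_sg]
    have e1 : (2 * (m - 1 - i) + 2 : ℕ) = 2 * m - 2 * i := by omega
    have e2 : (2 * (m - 1 - i) + 1 : ℕ) = 2 * m - (2 * i + 1) := by omega
    have c1 : ((2 * m - 2 * i : ℕ) : ZMod (2 ^ (d - 1))) = -((2 * i : ℕ) : ZMod (2 ^ (d - 1))) := by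
      rw [Nat.cast_sub (by omega), cast_2m d hd]
      ring
    have c2 : ((2 * m - (2 * i + 1) : ℕ) : ZMod (2 ^ (d - 1)))
        = -((2 * i + 1 : ℕ) : ZMod (2 ^ (d - 1))) := by
      rw [Nat.cast_sub (by omega), cast_2m d hd]
      ring
    rw [e1, e2, c1, c2]
  rw [Finset.sum_congr rfl h1, Finset.sum_sub_distrib]
  rw [Finset.sum_range_reflect (fun i => sg k d ((2 * i + 2 : ℕ) : ZMod (2 ^ (d - 1)))) m]
  rw [Finset.sum_range_reflect (fun i => sg k d ((2 * i + 1 : ℕ) : ZMod (2 ^ (d - 1)))) m]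
  rw [shift_sum k d hd, Finset.sum_sub_distrib]

/-- `t` as an element of the fixed subalgebra. -/
noncomputable def tF (hd : 3 ≤ d) : fixedSubalgebra k d :=
  ⟨tEl k d, (mem_fixed_iff k d _).2 (tau_t k d hd)⟩

lemma ideal_eq (hd : 3 ≤ d) : idealTmT k d = Ideal.span {tF k d hd} := by
  unfold idealTmT
  congr 1
  ext y
  simp only [Set.mem_setOf_eq, Set.mem_singleton_iff]
  constructor
  · intro h; exact Subtype.ext h
  · intro h; rw [h]; rfl

end Aux3

section Aux4
variable (k : Type*) [CommRing k] (d : ℕ)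

lemma mAlg_add_apply (f g : MonoidAlgebra (WittVector 2 k) (cyclicZ d)) (x : cyclicZ d) :
    (f + g).coeff x = f.coeff x + g.coeff x := Finsupp.add_apply f.coeff g.coeff x

lemma mAlg_sub_apply (f g : MonoidAlgebra (WittVector 2 k) (cyclicZ d)) (x : cyclicZ d) :
    (f - g).coeff x = f.coeff x - g.coeff x := Finsupp.sub_apply f.coeff g.coeff x

lemma mAlg_smul_apply (c : WittVector 2 k) (f : MonoidAlgebra (WittVector 2 k) (cyclicZ d))
    (x : cyclicZ d) : (c • f).coeff x = c * f.coeff x := by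
  rw [MonoidAlgebra.coeff_smul_apply, smul_eq_mul]

lemma mAlg_sum_apply {α : Type*} (s : Finset α) (f : α → MonoidAlgebra (WittVector 2 k) (cyclicZ d))
    (x : cyclicZ d) : (∑ i ∈ s, f i).coeff x = ∑ i ∈ s, (f i).coeff x := by
  rw [MonoidAlgebra.coeff_sum]; exact Finsupp.finset_sum_apply _ _ x

lemma ci {a b c : ℕ} (h : a < c) (h2 : b < c) : ((a : ZMod c) = (b : ZMod c)) ↔ a = b := by
  constructor
  · intro he
    rwa [ZMod.natCast_eq_natCast_iff, Nat.ModEq, Nat.mod_eq_of_lt h, Nat.mod_eq_of_lt h2] at he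
  · rintro rfl; rfl

lemma cne {a b c : ℕ} (h : a < c) (h2 : b < c) (hne : a ≠ b) :
    ((a : ZMod c) : ZMod c) ≠ (b : ZMod c) := fun he => hne ((ci h h2).1 he)

lemma neg_cast_eq {b : ℕ} (hb : b ≤ 2 ^ (d - 1)) :
    -((b : ℕ) : ZMod (2 ^ (d - 1))) = ((2 ^ (d - 1) - b : ℕ) : ZMod (2 ^ (d - 1))) := by
  rw [Nat.cast_sub hb, ZMod.natCast_self]
  ring

/-- spanning family of the fixed subalgebra -/
noncomputable def bV (j : ℕ) : MonoidAlgebra (WittVector 2 k) (cyclicZ d) :=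
  if j = 0 then 1
  else if j = 2 ^ (d - 2) then sg k d ((2 ^ (d - 2) : ℕ) : ZMod (2 ^ (d - 1)))
  else sg k d ((j : ℕ) : ZMod (2 ^ (d - 1))) + sg k d (-((j : ℕ) : ZMod (2 ^ (d - 1))))

lemma bV_apply (hd : 3 ≤ d) {i j : ℕ} (hi : i ≤ 2 ^ (d - 2)) (hj : j ≤ 2 ^ (d - 2)) :
    (bV k d j).coeff (Multiplicative.ofAdd ((i : ℕ) : ZMod (2 ^ (d - 1))))
      = if i = j then 1 else 0 := by
  have hn := hn_eq d hd
  have hm1 : 2 ≤ 2 ^ (d - 2) := by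
    calc 2 = 2 ^ 1 := rfl
    _ ≤ 2 ^ (d - 2) := Nat.pow_le_pow_right (by norm_num) (by omega)
  rcases eq_or_ne j 0 with h0 | h0
  · subst h0
    unfold bV
    rw [if_pos rfl, ← sg_zero,
      show (0 : ZMod (2 ^ (d - 1))) = ((0 : ℕ) : ZMod (2 ^ (d - 1))) by norm_num, sg_apply]
    by_cases hij : i = 0
    · subst hij; rw [if_pos rfl, if_pos rfl]
    · rw [if_neg (cne (by omega) (by omega) (Ne.symm hij)), if_neg hij]
  rcases eq_or_ne j (2 ^ (d - 2)) with hm | hm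
  · subst hm
    unfold bV
    rw [if_neg h0, if_pos rfl, sg_apply]
    by_cases hij : i = 2 ^ (d - 2)
    · subst hij; rw [if_pos rfl, if_pos rfl]
    · rw [if_neg (cne (by omega) (by omega) (Ne.symm hij)), if_neg hij]
  · unfold bV
    rw [if_neg h0, if_neg hm, mAlg_add_apply, sg_apply, sg_apply, neg_cast_eq d (by omega)]
    have hne2 : (((2 ^ (d - 1) - j : ℕ) : ZMod (2 ^ (d - 1))) : ZMod (2 ^ (d - 1)))
        ≠ ((i : ℕ) : ZMod (2 ^ (d - 1))) := cne (by omega) (by omega) (by omega)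
    rw [if_neg hne2, add_zero]
    by_cases hij : i = j
    · subst hij; rw [if_pos rfl, if_pos rfl]
    · rw [if_neg (cne (by omega) (by omega) (Ne.symm hij)), if_neg hij]

lemma bV_apply_high (hd : 3 ≤ d) {i j : ℕ} (him : 2 ^ (d - 2) < i) (hin : i < 2 ^ (d - 1))
    (hj : j ≤ 2 ^ (d - 2)) :
    (bV k d j).coeff (Multiplicative.ofAdd ((i : ℕ) : ZMod (2 ^ (d - 1))))
      = if 2 ^ (d - 1) - i = j then 1 else 0 := by
  have hn := hn_eq d hd
  have hm1 : 2 ≤ 2 ^ (d - 2) := by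
    calc 2 = 2 ^ 1 := rfl
    _ ≤ 2 ^ (d - 2) := Nat.pow_le_pow_right (by norm_num) (by omega)
  rcases eq_or_ne j 0 with h0 | h0
  · subst h0
    unfold bV
    rw [if_pos rfl, ← sg_zero,
      show (0 : ZMod (2 ^ (d - 1))) = ((0 : ℕ) : ZMod (2 ^ (d - 1))) by norm_num, sg_apply]
    rw [if_neg (cne (by omega) (by omega) (by omega)), if_neg (by omega)]
  rcases eq_or_ne j (2 ^ (d - 2)) with hm | hm
  · subst hm
    unfold bV
    rw [if_neg h0, if_pos rfl, sg_apply]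
    rw [if_neg (cne (by omega) (by omega) (by omega)), if_neg (by omega)]
  · unfold bV
    rw [if_neg h0, if_neg hm, mAlg_add_apply, sg_apply, sg_apply, neg_cast_eq d (by omega)]
    rw [if_neg (cne (by omega) (by omega) (by omega)), zero_add]
    by_cases hij : 2 ^ (d - 1) - i = j
    · rw [if_pos ((ci (c := 2 ^ (d - 1)) (by omega) (by omega)).2
        (show 2 ^ (d - 1) - j = i by omega)), if_pos hij]
    · rw [if_neg (cne (by omega) (by omega) (by omega)), if_neg hij]

lemma t_apply (hd : 3 ≤ d) {j : ℕ} (hj : j ≤ 2 ^ (d - 2)) :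
    (tEl k d).coeff (Multiplicative.ofAdd ((j : ℕ) : ZMod (2 ^ (d - 1))))
      = (-1 : WittVector 2 k) ^ j := by
  have hn := hn_eq d hd
  have hm1 : 2 ≤ 2 ^ (d - 2) := by
    calc 2 = 2 ^ 1 := rfl
    _ ≤ 2 ^ (d - 2) := Nat.pow_le_pow_right (by norm_num) (by omega)
  rw [tEl_eq, mAlg_sum_apply]
  have hterm : ∀ i ∈ Finset.range (2 ^ (d - 2)),
      (sg k d ((2 * i : ℕ) : ZMod (2 ^ (d - 1)))
        - sg k d ((2 * i + 1 : ℕ) : ZMod (2 ^ (d - 1)))).coeff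
        (Multiplicative.ofAdd ((j : ℕ) : ZMod (2 ^ (d - 1))))
      = (if 2 * i = j then (1 : WittVector 2 k) else 0)
        - (if 2 * i + 1 = j then 1 else 0) := by
    intro i hi
    rw [Finset.mem_range] at hi
    rw [mAlg_sub_apply, sg_apply, sg_apply]
    congr 1
    · by_cases h : 2 * i = j
      · rw [if_pos ((ci (c := 2 ^ (d - 1)) (by omega) (by omega)).2 h), if_pos h]
      · rw [if_neg (cne (by omega) (by omega) h), if_neg h]
    · by_cases h : 2 * i + 1 = j
      · rw [if_pos ((ci (c := 2 ^ (d - 1)) (by omega) (by omega)).2 h), if_pos h]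
      · rw [if_neg (cne (by omega) (by omega) h), if_neg h]
  rw [Finset.sum_congr rfl hterm, Finset.sum_sub_distrib]
  rcases Nat.even_or_odd j with he | ho
  · obtain ⟨c, rfl⟩ := he
    have h1 : ∀ i ∈ Finset.range (2 ^ (d - 2)),
        (if 2 * i = c + c then (1 : WittVector 2 k) else 0) = if i = c then 1 else 0 := by
      intro i _; exact if_congr (by omega) rfl rfl
    have h2 : ∀ i ∈ Finset.range (2 ^ (d - 2)),
        (if 2 * i + 1 = c + c then (1 : WittVector 2 k) else 0) = 0 := by
      intro i _; rw [if_neg (by omega)]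
    rw [Finset.sum_congr rfl h1, Finset.sum_congr rfl h2, Finset.sum_const_zero,
      Finset.sum_ite_eq' (Finset.range (2 ^ (d - 2))) c (fun _ => (1 : WittVector 2 k)),
      if_pos (Finset.mem_range.2 (by omega)), Even.neg_one_pow ⟨c, rfl⟩, sub_zero]
  · obtain ⟨c, rfl⟩ := ho
    have h1 : ∀ i ∈ Finset.range (2 ^ (d - 2)),
        (if 2 * i = 2 * c + 1 then (1 : WittVector 2 k) else 0) = 0 := by
      intro i _; rw [if_neg (by omega)]
    have h2 : ∀ i ∈ Finset.range (2 ^ (d - 2)),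
        (if 2 * i + 1 = 2 * c + 1 then (1 : WittVector 2 k) else 0) = if i = c then 1 else 0 := by
      intro i _; exact if_congr (by omega) rfl rfl
    rw [Finset.sum_congr rfl h1, Finset.sum_congr rfl h2, Finset.sum_const_zero,
      Finset.sum_ite_eq' (Finset.range (2 ^ (d - 2))) c (fun _ => (1 : WittVector 2 k)),
      if_pos (Finset.mem_range.2 (by omega)), Odd.neg_one_pow ⟨c, rfl⟩, zero_sub]

end Aux4

section Aux5
variable (k : Type*) [CommRing k] (d : ℕ)

lemma neg_m_cast (hd : 3 ≤ d) :
    -((2 ^ (d - 2) : ℕ) : ZMod (2 ^ (d - 1))) = ((2 ^ (d - 2) : ℕ) : ZMod (2 ^ (d - 1))) := by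
  have h : ((2 ^ (d - 2) : ℕ) : ZMod (2 ^ (d - 1))) + ((2 ^ (d - 2) : ℕ) : ZMod (2 ^ (d - 1)))
      = 0 := by
    rw [← Nat.cast_add, show 2 ^ (d - 2) + 2 ^ (d - 2) = 2 * 2 ^ (d - 2) by ring, cast_2m d hd]
  exact neg_eq_of_add_eq_zero_left h

lemma bV_fixed (hd : 3 ≤ d) (j : ℕ) : bV k d j ∈ fixedSubalgebra k d := by
  rw [mem_fixed_iff]
  unfold bV
  split_ifs with h0 hm
  · exact map_one _
  · rw [tau_sg, neg_m_cast d hd]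
  · rw [map_add, tau_sg, tau_sg, neg_neg, add_comm]

noncomputable def bF (hd : 3 ≤ d) (j : ℕ) : fixedSubalgebra k d :=
  ⟨bV k d j, bV_fixed k d hd j⟩

lemma fixed_decomp (hd : 3 ≤ d) (f : MonoidAlgebra (WittVector 2 k) (cyclicZ d))
    (hf : tauAut k d f = f) :
    f = ∑ j ∈ Finset.range (2 ^ (d - 2) + 1),
      f.coeff (Multiplicative.ofAdd ((j : ℕ) : ZMod (2 ^ (d - 1)))) • bV k d j := by
  have hn := hn_eq d hd
  have hm1 : 2 ≤ 2 ^ (d - 2) := by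
    calc 2 = 2 ^ 1 := rfl
    _ ≤ 2 ^ (d - 2) := Nat.pow_le_pow_right (by norm_num) (by omega)
  apply MonoidAlgebra.ext
  ext1 x
  set v := (Multiplicative.toAdd x).val with hv
  have hvlt : v < 2 ^ (d - 1) := ZMod.val_lt _
  have hx : x = Multiplicative.ofAdd ((v : ℕ) : ZMod (2 ^ (d - 1))) := by
    rw [hv, ZMod.natCast_val, ZMod.cast_id]
    rfl
  rw [hx, mAlg_sum_apply]
  by_cases hvm : v ≤ 2 ^ (d - 2)
  · have hterm : ∀ j ∈ Finset.range (2 ^ (d - 2) + 1),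
        (f.coeff (Multiplicative.ofAdd ((j : ℕ) : ZMod (2 ^ (d - 1)))) • bV k d j).coeff
          (Multiplicative.ofAdd ((v : ℕ) : ZMod (2 ^ (d - 1))))
        = if v = j then f.coeff (Multiplicative.ofAdd ((j : ℕ) : ZMod (2 ^ (d - 1)))) else 0 := by
      intro j hj
      rw [Finset.mem_range] at hj
      rw [mAlg_smul_apply, bV_apply k d hd hvm (by omega), mul_ite, mul_one, mul_zero]
    rw [Finset.sum_congr rfl hterm, Finset.sum_ite_eq (Finset.range (2 ^ (d - 2) + 1)) v
      (fun j => f.coeff (Multiplicative.ofAdd ((j : ℕ) : ZMod (2 ^ (d - 1))))),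
      if_pos (Finset.mem_range.2 (by omega))]
  · set j0 := 2 ^ (d - 1) - v with hj0
    have hterm : ∀ j ∈ Finset.range (2 ^ (d - 2) + 1),
        (f.coeff (Multiplicative.ofAdd ((j : ℕ) : ZMod (2 ^ (d - 1)))) • bV k d j).coeff
          (Multiplicative.ofAdd ((v : ℕ) : ZMod (2 ^ (d - 1))))
        = if j0 = j then f.coeff (Multiplicative.ofAdd ((j : ℕ) : ZMod (2 ^ (d - 1)))) else 0 := by
      intro j hj
      rw [Finset.mem_range] at hj
      rw [mAlg_smul_apply, bV_apply_high k d hd (by omega) hvlt (by omega), mul_ite, mul_one,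
        mul_zero]
    rw [Finset.sum_congr rfl hterm, Finset.sum_ite_eq (Finset.range (2 ^ (d - 2) + 1)) j0
      (fun j => f.coeff (Multiplicative.ofAdd ((j : ℕ) : ZMod (2 ^ (d - 1))))),
      if_pos (Finset.mem_range.2 (by omega))]
    have hsym : f.coeff (Multiplicative.ofAdd ((v : ℕ) : ZMod (2 ^ (d - 1))))
        = f.coeff (Multiplicative.ofAdd (-((v : ℕ) : ZMod (2 ^ (d - 1))))) := by
      conv_lhs => rw [← hf]
      rw [tau_apply]
    rw [hsym, neg_cast_eq d (by omega)]

lemma fixed_decompF (hd : 3 ≤ d) (f : fixedSubalgebra k d) :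
    f = ∑ j ∈ Finset.range (2 ^ (d - 2) + 1),
      (f : MonoidAlgebra (WittVector 2 k) (cyclicZ d)).coeff
        (Multiplicative.ofAdd ((j : ℕ) : ZMod (2 ^ (d - 1)))) • bF k d hd j := by
  apply Subtype.ext
  have hcoe : ((∑ j ∈ Finset.range (2 ^ (d - 2) + 1),
      (f : MonoidAlgebra (WittVector 2 k) (cyclicZ d)).coeff
        (Multiplicative.ofAdd ((j : ℕ) : ZMod (2 ^ (d - 1)))) • bF k d hd j :
      fixedSubalgebra k d) : MonoidAlgebra (WittVector 2 k) (cyclicZ d))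
      = ∑ j ∈ Finset.range (2 ^ (d - 2) + 1),
      (f : MonoidAlgebra (WittVector 2 k) (cyclicZ d)).coeff
        (Multiplicative.ofAdd ((j : ℕ) : ZMod (2 ^ (d - 1)))) • bV k d j := by
    rw [AddSubmonoidClass.coe_finset_sum]
    rfl
  rw [hcoe]
  exact fixed_decomp k d hd _ ((mem_fixed_iff k d _).1 f.2)

lemma tF_decomp (hd : 3 ≤ d) : tF k d hd = ∑ j ∈ Finset.range (2 ^ (d - 2) + 1),
    ((-1 : WittVector 2 k) ^ j) • bF k d hd j := by
  have h := fixed_decompF k d hd (tF k d hd)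
  rw [h]
  refine Finset.sum_congr rfl fun j hj => ?_
  rw [Finset.mem_range] at hj
  congr 1
  exact t_apply k d hd (by omega)

end Aux5

section Aux6
variable (k : Type*) [CommRing k] (d : ℕ)

lemma m_even (hd : 3 ≤ d) : Even (2 ^ (d - 2)) := by
  have h : 2 ^ (d - 2) = 2 * 2 ^ (d - 3) := by
    rw [show d - 2 = (d - 3) + 1 by omega, pow_succ]; ring
  exact ⟨2 ^ (d - 3), by omega⟩

lemma tF_mem (hd : 3 ≤ d) : tF k d hd ∈ idealTmT k d := by
  rw [ideal_eq k d hd]; exact Ideal.mem_span_singleton_self _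

lemma part1 (hd : 3 ≤ d) :
    Nonempty (Module.Basis (Fin (2 ^ (d - 2))) (WittVector 2 k)
      (fixedSubalgebra k d ⧸ idealTmT k d)) := by
  classical
  have hn := hn_eq d hd
  have hm1 : 2 ≤ 2 ^ (d - 2) := by
    calc 2 = 2 ^ 1 := rfl
    _ ≤ 2 ^ (d - 2) := Nat.pow_le_pow_right (by norm_num) (by omega)
  set mk' := Ideal.Quotient.mkₐ (WittVector 2 k) (idealTmT k d) with hmk'
  set qb : Fin (2 ^ (d - 2)) → (fixedSubalgebra k d ⧸ idealTmT k d) :=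
    fun j => mk' (bF k d hd j.val) with hqb
  have hmk_tF : mk' (tF k d hd) = 0 := by
    rw [hmk', Ideal.Quotient.mkₐ_eq_mk, Ideal.Quotient.eq_zero_iff_mem]
    exact tF_mem k d hd
  have hbFm : ∀ j : Fin (2 ^ (d - 2)), mk' (bF k d hd j.val)
      ∈ Submodule.span (WittVector 2 k) (Set.range qb) :=
    fun j => Submodule.subset_span ⟨j, rfl⟩
  have hbFtop : mk' (bF k d hd (2 ^ (d - 2)))
      ∈ Submodule.span (WittVector 2 k) (Set.range qb) := by
    have hb : bF k d hd (2 ^ (d - 2))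
        = tF k d hd - ∑ j ∈ Finset.range (2 ^ (d - 2)),
            ((-1 : WittVector 2 k) ^ j) • bF k d hd j := by
      have h := tF_decomp k d hd
      rw [Finset.sum_range_succ, Even.neg_one_pow (m_even d hd), one_smul] at h
      rw [h]; ring
    rw [hb, map_sub, hmk_tF, zero_sub]
    refine Submodule.neg_mem _ ?_
    rw [map_sum]
    refine Submodule.sum_mem _ fun j hj => ?_
    rw [Finset.mem_range] at hj
    rw [map_smul]
    exact Submodule.smul_mem _ _ (hbFm ⟨j, hj⟩)
  have hspan : Submodule.span (WittVector 2 k) (Set.range qb) = ⊤ := by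
    rw [Submodule.eq_top_iff']
    intro θ
    obtain ⟨f, rfl⟩ := Ideal.Quotient.mkₐ_surjective (WittVector 2 k) (idealTmT k d) θ
    rw [fixed_decompF k d hd f, map_sum]
    refine Submodule.sum_mem _ fun j hj => ?_
    rw [Finset.mem_range] at hj
    rw [map_smul]
    refine Submodule.smul_mem _ _ ?_
    rcases lt_or_eq_of_le (Nat.lt_succ_iff.mp hj) with hjm | hjm
    · exact hbFm ⟨j, hjm⟩
    · subst hjm; exact hbFtop
  have hind : LinearIndependent (WittVector 2 k) qb := by
    rw [Fintype.linearIndependent_iff]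
    intro c hc
    have h1 : mk' (∑ i : Fin (2 ^ (d - 2)), c i • bF k d hd i.val) = 0 := by
      rw [map_sum]
      simp only [map_smul]
      exact hc
    have h2 : (∑ i : Fin (2 ^ (d - 2)), c i • bF k d hd i.val) ∈ idealTmT k d := by
      rw [← Ideal.Quotient.eq_zero_iff_mem]
      rw [hmk', Ideal.Quotient.mkₐ_eq_mk] at h1
      exact h1
    rw [ideal_eq k d hd, Ideal.mem_span_singleton'] at h2
    obtain ⟨a, ha⟩ := h2
    have hcoe : (a : MonoidAlgebra (WittVector 2 k) (cyclicZ d)) * tEl k d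
        = ∑ i : Fin (2 ^ (d - 2)), c i • bV k d i.val := by
      have h3 := congrArg Subtype.val ha
      rw [MulMemClass.coe_mul] at h3
      exact h3.trans (by rw [AddSubmonoidClass.coe_finset_sum]; rfl)
    have hw : (∑ i : Fin (2 ^ (d - 2)), c i • bV k d i.val)
        ∈ Submodule.span (WittVector 2 k) {tEl k d} := by
      rw [← hcoe]; exact mul_t_mem k d hd _
    obtain ⟨w, hw'⟩ := Submodule.mem_span_singleton.1 hw
    have hw0 : w = 0 := by
      have h4 := congrArg
        (fun z : MonoidAlgebra (WittVector 2 k) (cyclicZ d) =>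
          z.coeff (Multiplicative.ofAdd ((2 ^ (d - 2) : ℕ) : ZMod (2 ^ (d - 1))))) hw'
      rw [mAlg_smul_apply, t_apply k d hd le_rfl, Even.neg_one_pow (m_even d hd), mul_one,
        mAlg_sum_apply] at h4
      have hterm : ∀ i ∈ (Finset.univ : Finset (Fin (2 ^ (d - 2)))),
          (c i • bV k d i.val).coeff (Multiplicative.ofAdd ((2 ^ (d - 2) : ℕ) : ZMod (2 ^ (d - 1))))
          = 0 := by
        intro i _
        rw [mAlg_smul_apply, bV_apply k d hd le_rfl (le_of_lt i.isLt),
          if_neg (Nat.ne_of_gt i.isLt), mul_zero]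
      rw [Finset.sum_congr rfl hterm, Finset.sum_const_zero] at h4
      exact h4
    rw [hw0, zero_smul] at hw'
    intro j0
    have h5 := congrArg
      (fun z : MonoidAlgebra (WittVector 2 k) (cyclicZ d) =>
        z.coeff (Multiplicative.ofAdd ((j0.val : ℕ) : ZMod (2 ^ (d - 1))))) hw'
    rw [mAlg_sum_apply] at h5
    have hterm : ∀ i ∈ (Finset.univ : Finset (Fin (2 ^ (d - 2)))),
        (c i • bV k d i.val).coeff (Multiplicative.ofAdd ((j0.val : ℕ) : ZMod (2 ^ (d - 1))))
        = if i = j0 then c i else 0 := by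
      intro i _
      rw [mAlg_smul_apply, bV_apply k d hd (le_of_lt j0.isLt) (le_of_lt i.isLt), mul_ite,
        mul_one, mul_zero]
      exact if_congr (by rw [Fin.ext_iff]; exact eq_comm) rfl rfl
    rw [Finset.sum_congr rfl hterm, Finset.sum_ite_eq' Finset.univ j0 c,
      if_pos (Finset.mem_univ _)] at h5
    have h6 : (0 : MonoidAlgebra (WittVector 2 k) (cyclicZ d)).coeff
        (Multiplicative.ofAdd ((j0.val : ℕ) : ZMod (2 ^ (d - 1)))) = 0 := rfl
    rw [h6] at h5
    exact h5.symm
  exact ⟨Module.Basis.mk hind hspan.ge⟩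

end Aux6

section Aux7
variable (k : Type*) [CommRing k] (d : ℕ)

lemma bV_one (hd : 3 ≤ d) : bV k d 1 = sigma k d + sigmaInv k d := by
  have hm1 : 2 ≤ 2 ^ (d - 2) := by
    calc 2 = 2 ^ 1 := rfl
    _ ≤ 2 ^ (d - 2) := Nat.pow_le_pow_right (by norm_num) (by omega)
  unfold bV
  rw [if_neg (by omega), if_neg (by omega)]
  rw [sigma_eq]
  have : sigmaInv k d = sg k d (-1) := rfl
  rw [this]
  norm_num

lemma recur1 (hd : 3 ≤ d) (h : 2 ≤ 2 ^ (d - 2) - 1) :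
    bV k d 2 = (sigma k d + sigmaInv k d) * bV k d 1 - 2 := by
  have hm1 : 2 ≤ 2 ^ (d - 2) := by omega
  rw [← bV_one k d hd]
  unfold bV
  rw [if_neg (by omega), if_neg (by omega), if_neg (by omega), if_neg (by omega)]
  rw [add_mul, mul_add, mul_add, sg_mul, sg_mul, sg_mul, sg_mul]
  have e1 : ((1 : ℕ) : ZMod (2 ^ (d - 1))) + ((1 : ℕ) : ZMod (2 ^ (d - 1)))
      = ((2 : ℕ) : ZMod (2 ^ (d - 1))) := by push_cast; ring
  have e2 : ((1 : ℕ) : ZMod (2 ^ (d - 1))) + -((1 : ℕ) : ZMod (2 ^ (d - 1))) = 0 := by ring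
  have e3 : -((1 : ℕ) : ZMod (2 ^ (d - 1))) + ((1 : ℕ) : ZMod (2 ^ (d - 1))) = 0 := by ring
  have e4 : -((1 : ℕ) : ZMod (2 ^ (d - 1))) + -((1 : ℕ) : ZMod (2 ^ (d - 1)))
      = -((2 : ℕ) : ZMod (2 ^ (d - 1))) := by push_cast; ring
  rw [e1, e2, e3, e4, sg_zero]
  ring

lemma recur2 (hd : 3 ≤ d) {j : ℕ} (h1 : 2 ≤ j) (h2 : j + 1 ≤ 2 ^ (d - 2) - 1) :
    bV k d (j + 1) = (sigma k d + sigmaInv k d) * bV k d j - bV k d (j - 1) := by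
  have hm1 : 2 ≤ 2 ^ (d - 2) := by omega
  rw [← bV_one k d hd]
  unfold bV
  rw [if_neg (by omega), if_neg (by omega), if_neg (by omega), if_neg (by omega),
    if_neg (by omega), if_neg (by omega), if_neg (by omega), if_neg (by omega)]
  rw [add_mul, mul_add, mul_add, sg_mul, sg_mul, sg_mul, sg_mul]
  have e1 : ((1 : ℕ) : ZMod (2 ^ (d - 1))) + ((j : ℕ) : ZMod (2 ^ (d - 1)))
      = ((j + 1 : ℕ) : ZMod (2 ^ (d - 1))) := by push_cast; ring
  have e2 : ((1 : ℕ) : ZMod (2 ^ (d - 1))) + -((j : ℕ) : ZMod (2 ^ (d - 1)))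
      = -((j - 1 : ℕ) : ZMod (2 ^ (d - 1))) := by
    rw [Nat.cast_sub (by omega)]; push_cast; ring
  have e3 : -((1 : ℕ) : ZMod (2 ^ (d - 1))) + ((j : ℕ) : ZMod (2 ^ (d - 1)))
      = ((j - 1 : ℕ) : ZMod (2 ^ (d - 1))) := by
    rw [Nat.cast_sub (by omega)]; push_cast; ring
  have e4 : -((1 : ℕ) : ZMod (2 ^ (d - 1))) + -((j : ℕ) : ZMod (2 ^ (d - 1)))
      = -((j + 1 : ℕ) : ZMod (2 ^ (d - 1))) := by push_cast; ring
  rw [e1, e2, e3, e4]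
  ring

end Aux7

section Aux8
variable (k : Type*) [CommRing k] (d : ℕ)

lemma part2 (hd : 3 ≤ d) (x : fixedSubalgebra k d)
    (hx : (x : MonoidAlgebra (WittVector 2 k) (cyclicZ d)) = sigma k d + sigmaInv k d) :
    Algebra.adjoin (WittVector 2 k) {Ideal.Quotient.mk (idealTmT k d) x} = ⊤ := by
  classical
  have hm1 : 2 ≤ 2 ^ (d - 2) := by
    calc 2 = 2 ^ 1 := rfl
    _ ≤ 2 ^ (d - 2) := Nat.pow_le_pow_right (by norm_num) (by omega)
  set A := Algebra.adjoin (WittVector 2 k) {Ideal.Quotient.mk (idealTmT k d) x} with hA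
  set mk' := Ideal.Quotient.mkₐ (WittVector 2 k) (idealTmT k d) with hmk'
  have hmkeq : ∀ g : fixedSubalgebra k d, Ideal.Quotient.mk (idealTmT k d) g = mk' g :=
    fun g => rfl
  have hx1 : x = bF k d hd 1 := by
    apply Subtype.ext
    rw [hx]
    exact (bV_one k d hd).symm
  have hxA : mk' (bF k d hd 1) ∈ A := by
    rw [← hx1, ← hmkeq]
    exact Algebra.subset_adjoin rfl
  have hmk_tF : mk' (tF k d hd) = 0 := by
    rw [hmk', Ideal.Quotient.mkₐ_eq_mk, Ideal.Quotient.eq_zero_iff_mem]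
    exact tF_mem k d hd
  have claim : ∀ j, j ≤ 2 ^ (d - 2) - 1 → mk' (bF k d hd j) ∈ A := by
    intro j
    induction j using Nat.strong_induction_on with
    | _ j ih =>
      intro hjm
      rcases Nat.lt_or_ge j 2 with hj2 | hj2
      · interval_cases j
        · have h0 : bF k d hd 0 = 1 := by
            apply Subtype.ext
            show bV k d 0 = 1
            unfold bV
            rw [if_pos rfl]
          rw [h0, map_one]
          exact one_mem A
        · exact hxA
      · rcases eq_or_ne j 2 with rfl | hj3
        · have hb : bF k d hd 2 = bF k d hd 1 * bF k d hd 1 - 2 := by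
            apply Subtype.ext
            rw [AddSubgroupClass.coe_sub, MulMemClass.coe_mul]
            show bV k d 2 = bV k d 1 * bV k d 1 - 2
            rw [recur1 k d hd (by omega), bV_one k d hd]
          rw [hb, map_sub, map_mul]
          refine sub_mem (mul_mem hxA hxA) ?_
          have h2m := Subalgebra.algebraMap_mem A (2 : WittVector 2 k)
          rw [map_ofNat] at h2m
          rw [map_ofNat]
          exact h2m
        · have hb : bF k d hd j = bF k d hd 1 * bF k d hd (j - 1) - bF k d hd (j - 2) := by
            apply Subtype.ext
            rw [AddSubgroupClass.coe_sub, MulMemClass.coe_mul]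
            show bV k d j = bV k d 1 * bV k d (j - 1) - bV k d (j - 2)
            have hr := recur2 k d hd (j := j - 1) (by omega) (by omega)
            rw [show j - 1 + 1 = j by omega, show j - 1 - 1 = j - 2 by omega] at hr
            rw [hr, bV_one k d hd]
          rw [hb, map_sub, map_mul]
          exact sub_mem (mul_mem hxA (ih (j - 1) (by omega) (by omega)))
            (ih (j - 2) (by omega) (by omega))
  have claimTop : mk' (bF k d hd (2 ^ (d - 2))) ∈ A := by
    have hb : bF k d hd (2 ^ (d - 2))
        = tF k d hd - ∑ j ∈ Finset.range (2 ^ (d - 2)),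
            ((-1 : WittVector 2 k) ^ j) • bF k d hd j := by
      have h := tF_decomp k d hd
      rw [Finset.sum_range_succ, Even.neg_one_pow (m_even d hd), one_smul] at h
      rw [h]; ring
    rw [hb, map_sub, hmk_tF, zero_sub]
    refine neg_mem ?_
    rw [map_sum]
    refine Subalgebra.sum_mem A fun j hj => ?_
    rw [Finset.mem_range] at hj
    rw [map_smul]
    exact Subalgebra.smul_mem A (claim j (by omega)) _
  rw [eq_top_iff]
  rintro θ -
  obtain ⟨f, rfl⟩ := Ideal.Quotient.mk_surjective θ
  rw [hmkeq, fixed_decompF k d hd f, map_sum]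
  refine Subalgebra.sum_mem A fun j hj => ?_
  rw [Finset.mem_range] at hj
  rw [map_smul]
  refine Subalgebra.smul_mem A ?_ _
  rcases lt_or_eq_of_le (Nat.lt_succ_iff.mp hj) with hjm | hjm
  · exact claim j (by omega)
  · subst hjm; exact claimTop

end Aux8

/-- For `k` algebraically closed of characteristic `2`, `W = W(k)`, `d ≥ 3`,
and `Z` cyclic of order `2^(d-1)`, the quotient `Θ = (WZ)^τ/(T(σ²) − σT(σ²))` is a free
`W`-module of rank `2^(d-2)`, and `Θ` is generated as a `W`-algebra by the residue class
of `σ + σ⁻¹`. -/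
theorem quotient_fixedSubalgebra_TmT
    {k : Type*} [Field k] [IsAlgClosed k] [CharP k 2] (d : ℕ) (hd : 3 ≤ d) :
    Nonempty (Module.Basis (Fin (2 ^ (d - 2))) (WittVector 2 k)
        (fixedSubalgebra k d ⧸ idealTmT k d)) ∧
    ∀ x : fixedSubalgebra k d,
      (x : MonoidAlgebra (WittVector 2 k) (cyclicZ d)) = sigma k d + sigmaInv k d →
        Algebra.adjoin (WittVector 2 k) {Ideal.Quotient.mk (idealTmT k d) x} = ⊤ := by
  exact ⟨part1 k d hd, fun x hx => part2 k d hd x hx⟩
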